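/- In the algebra of noncommutative formal power series on two letters a_0, a_1, the identity Σ_{k=0}^∞ a_0 a_1^k = Σ_{k,l=0}^∞ (-1)^l · a_1^k ⧢ (a_1^l a_0) holds. -/

import Mathlib

/-- The shuffle product of two words, as a multiset of words (with multiplicities). -/
def shuffles {α : Type*} : List α → List α → Multiset (List α)
  | [], w => {w}
  | a :: v, [] => {a :: v}
  | a :: v, b :: w =>
      ((shuffles v (b :: w)).map (a :: ·)) + ((shuffles (a :: v) w).map (b :: ·))

lemma perm_of_mem_shuffles {α : Type*} :
    ∀ (u v w : List α), w ∈ shuffles u v → w.Perm (u ++ v)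
  | [], v, w, h => by
      simp [shuffles] at h; simp [h]
  | a :: u, [], w, h => by
      simp [shuffles] at h; simp [h]
  | a :: u, b :: v, w, h => by
      rw [shuffles] at h
      simp only [Multiset.mem_add, Multiset.mem_map] at h
      rcases h with ⟨w1, h1, rfl⟩ | ⟨w2, h2, rfl⟩
      · exact (perm_of_mem_shuffles u (b :: v) w1 h1).cons a
      · exact ((perm_of_mem_shuffles (a :: u) v w2 h2).cons b).trans List.perm_middle.symm
  termination_by u v w => u.length + v.length

lemma count_cons_map_cons {α : Type*} [DecidableEq α] (a c : α) (w : List α)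
    (s : Multiset (List α)) :
    Multiset.count (c :: w) (s.map (a :: ·)) =
      if c = a then Multiset.count w s else 0 := by
  split_ifs with h
  · subst h
    exact Multiset.count_map_eq_count' _ _ (fun x y hxy => by simpa using hxy) _
  · refine Multiset.count_eq_zero_of_notMem ?_
    simp only [Multiset.mem_map]
    rintro ⟨x, -, hx⟩
    injection hx with h1 _
    exact h h1.symm
lemma fin2_eq_one {c : Fin 2} (h : c ≠ 0) : c = 1 := by
  fin_cases c <;> simp_all

lemma onezero_inj : ∀ (i i' j j' : ℕ),
    List.replicate i (1:Fin 2) ++ (0:Fin 2) :: List.replicate j 1 =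
      List.replicate i' (1:Fin 2) ++ (0:Fin 2) :: List.replicate j' 1 →
    i = i' ∧ j = j'
  | 0, 0, j, j', h => by
      simp only [List.replicate_zero, List.nil_append, List.cons.injEq] at h
      have := congrArg List.length h.2
      simp at this
      exact ⟨rfl, this⟩
  | 0, i'+1, j, j', h => by
      simp [List.replicate_succ] at h
  | i+1, 0, j, j', h => by
      simp [List.replicate_succ] at h
  | i+1, i'+1, j, j', h => by
      simp only [List.replicate_succ, List.cons_append, List.cons.injEq] at h
      obtain ⟨h1, h2⟩ := onezero_inj i i' j j' h.2
      exact ⟨by omega, h2⟩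

lemma decomp (w : List (Fin 2)) (hw : w.count 0 = 1) :
    ∃ i j, w = List.replicate i (1:Fin 2) ++ (0:Fin 2) :: List.replicate j 1 := by
  induction w with
  | nil => simp at hw
  | cons c t ih =>
    by_cases hc : c = 0
    · subst hc
      have ht : t.count 0 = 0 := by
        rw [List.count_cons] at hw; simp at hw; omega
      refine ⟨0, t.length, ?_⟩
      have : t = List.replicate t.length (1:Fin 2) := by
        rw [List.eq_replicate_iff]
        refine ⟨rfl, fun b hb => ?_⟩
        refine fin2_eq_one fun hb0 => ?_
        rw [List.count_eq_zero] at ht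
        exact ht (hb0 ▸ hb)
      simp [← this]
    · have hc1 : c = 1 := fin2_eq_one hc
      have : t.count 0 = 1 := by
        rw [List.count_cons] at hw; simp [hc] at hw; omega
      obtain ⟨i, j, rfl⟩ := ih this
      exact ⟨i+1, j, by simp [List.replicate_succ, hc1]⟩

lemma count_shuffles_ne (k l : ℕ) (w : List (Fin 2)) (hw : w.count 0 ≠ 1) :
    Multiset.count w
      (shuffles (List.replicate k (1:Fin 2)) (List.replicate l (1:Fin 2) ++ [(0:Fin 2)])) = 0 := by
  refine Multiset.count_eq_zero_of_notMem fun hmem => hw ?_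
  have hp := perm_of_mem_shuffles _ _ _ hmem
  have hc := hp.count_eq 0
  rw [hc]
  simp [List.count_append, List.count_replicate, show (0:Fin 2) ≠ 1 by decide]

lemma count_shuffles : ∀ (k l i j : ℕ),
    Multiset.count (List.replicate i (1:Fin 2) ++ (0:Fin 2) :: List.replicate j 1)
      (shuffles (List.replicate k (1:Fin 2)) (List.replicate l (1:Fin 2) ++ [(0:Fin 2)])) =
      if i + j = k + l ∧ l ≤ i then Nat.choose i l else 0
  | 0, l, i, j => by
      rw [List.replicate_zero, shuffles, Multiset.count_singleton]
      have e : (List.replicate l (1:Fin 2) ++ [(0:Fin 2)]) =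
          List.replicate l (1:Fin 2) ++ (0:Fin 2) :: List.replicate 0 1 := by simp
      rw [e]
      by_cases h : i = l ∧ j = 0
      · obtain ⟨rfl, rfl⟩ := h
        rw [if_pos rfl, if_pos (by omega), Nat.choose_self]
      · rw [if_neg (fun he => h (onezero_inj _ _ _ _ he)), if_neg (by omega)]
  | k+1, 0, i, j => by
      rw [List.replicate_succ, List.replicate_zero, List.nil_append, shuffles,
        Multiset.count_add]
      have h2 : shuffles ((1:Fin 2) :: List.replicate k 1) ([] : List (Fin 2)) =
          {(1:Fin 2) :: List.replicate k 1} := by rw [shuffles]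
      rw [h2]
      cases i with
      | zero =>
        rw [List.replicate_zero, List.nil_append, count_cons_map_cons, count_cons_map_cons,
          if_neg (by decide), if_pos rfl, zero_add, Multiset.count_singleton]
        by_cases hj : j = k + 1
        · subst hj
          rw [if_pos (by rw [List.replicate_succ]), if_pos (by omega), Nat.choose_self]
        · rw [if_neg (fun h => hj (by simpa using congrArg List.length h)), if_neg (by omega)]
      | succ i' =>
        rw [List.replicate_succ, List.cons_append, count_cons_map_cons, count_cons_map_cons,
          if_pos rfl, if_neg (by decide), add_zero]
        have hzero : (List.replicate 0 (1:Fin 2) ++ [(0:Fin 2)]) = [(0:Fin 2)] := by simp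
        rw [← hzero, count_shuffles k 0 i' j]
        by_cases h : i' + j = k
        · rw [if_pos (by omega), if_pos (by omega), Nat.choose_zero_right,
            Nat.choose_zero_right]
        · rw [if_neg (by omega), if_neg (by omega)]
  | k+1, l+1, i, j => by
      have e1 : List.replicate (k+1) (1:Fin 2) = (1:Fin 2) :: List.replicate k 1 :=
        List.replicate_succ ..
      have e2 : List.replicate (l+1) (1:Fin 2) ++ [(0:Fin 2)] =
          (1:Fin 2) :: (List.replicate l 1 ++ [(0:Fin 2)]) := by
        rw [List.replicate_succ, List.cons_append]
      rw [e1, e2, shuffles, Multiset.count_add]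
      cases i with
      | zero =>
        rw [List.replicate_zero, List.nil_append, count_cons_map_cons, count_cons_map_cons,
          if_neg (by decide), if_neg (by decide), if_neg (by omega : ¬(0 + j = k + 1 + (l+1) ∧ l + 1 ≤ 0))]
      | succ i' =>
        rw [List.replicate_succ, List.cons_append, count_cons_map_cons, count_cons_map_cons,
          if_pos rfl, if_pos rfl, ← e1, ← e2, count_shuffles k (l+1) i' j,
          count_shuffles (k+1) l i' j]
        by_cases hmain : i' + j = k + l + 1 ∧ l ≤ i'
        · by_cases hl : l + 1 ≤ i'
          · rw [if_pos (by omega), if_pos (by omega), if_pos (by omega), Nat.choose_succ_succ]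
            exact Nat.add_comm _ _
          · rw [if_neg (by omega), if_pos (by omega), if_pos (by omega), zero_add,
              Nat.choose_succ_succ, Nat.choose_eq_zero_of_lt (by omega : i' < l + 1), add_zero]
        · rw [if_neg (by omega), if_neg (by omega), if_neg (by omega), add_zero]
  termination_by k l => k + l
lemma alt_sum (i : ℕ) :
    ∑ l ∈ Finset.range (i+1), (-1:ℝ)^l * (Nat.choose i l : ℝ) = if i = 0 then 1 else 0 := by
  have h := Int.alternating_sum_range_choose (n := i)
  have h2 := congrArg (fun z : ℤ => (z : ℝ)) h
  push_cast at h2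
  simpa using h2

open Classical in
/-- Coefficient-wise identity of formal power series on letters `a₀ = 0`, `a₁ = 1` in `Fin 2`:
`∑_{k≥0} a₀ a₁^k = ∑_{k,l≥0} (-1)^l · (a₁^k ⧢ (a₁^l a₀))`.  For a word `w` only the pairs
`(k,l)` with `k + l + 1 = |w|` can contribute, so the right-hand coefficient is a finite sum
over the antidiagonal. -/
theorem stmt2 (w : List (Fin 2)) :
    (if ∃ k, w = (0 : Fin 2) :: List.replicate k 1 then (1 : ℝ) else 0) =
      ∑ p ∈ Finset.HasAntidiagonal.antidiagonal (w.length - 1),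
        (-1 : ℝ) ^ p.2 *
          (Multiset.count w
            (shuffles (List.replicate p.1 (1 : Fin 2))
              (List.replicate p.2 (1 : Fin 2) ++ [(0 : Fin 2)])) : ℝ) := by
  by_cases hw : w.count 0 = 1
  · obtain ⟨i, j, rfl⟩ := decomp w hw
    have hlen : (List.replicate i (1:Fin 2) ++ (0:Fin 2) :: List.replicate j 1).length - 1
        = i + j := by simp
    rw [hlen]
    have step1 : (∑ p ∈ Finset.HasAntidiagonal.antidiagonal (i+j),
          (-1:ℝ)^p.2 * (Multiset.count
            (List.replicate i (1:Fin 2) ++ (0:Fin 2) :: List.replicate j 1)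
            (shuffles (List.replicate p.1 (1:Fin 2))
              (List.replicate p.2 (1:Fin 2) ++ [(0:Fin 2)])) : ℝ))
        = ∑ p ∈ Finset.HasAntidiagonal.antidiagonal (i+j), (-1:ℝ)^p.2 * (Nat.choose i p.2 : ℝ) := by
      refine Finset.sum_congr rfl fun p hp => ?_
      rw [Finset.HasAntidiagonal.mem_antidiagonal] at hp
      rw [count_shuffles]
      by_cases h2 : p.2 ≤ i
      · rw [if_pos ⟨by omega, h2⟩]
      · rw [if_neg (by omega), Nat.choose_eq_zero_of_lt (by omega)]
    rw [step1, Finset.Nat.sum_antidiagonal_eq_sum_range_succ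
      (fun k l => (-1:ℝ)^l * (Nat.choose i l : ℝ))]
    have hrefl := Finset.sum_range_reflect (fun l => (-1:ℝ)^l * (Nat.choose i l : ℝ)) (i+j+1)
    simp only [Nat.add_sub_cancel] at hrefl
    rw [hrefl]
    have hsub : ∑ l ∈ Finset.range (i+j+1), (-1:ℝ)^l * (Nat.choose i l : ℝ)
        = ∑ l ∈ Finset.range (i+1), (-1:ℝ)^l * (Nat.choose i l : ℝ) := by
      symm
      refine Finset.sum_subset (Finset.range_subset_range.mpr (by omega)) fun x hx hnx => ?_
      simp only [Finset.mem_range] at hx hnx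
      rw [Nat.choose_eq_zero_of_lt (by omega)]
      simp
    rw [hsub, alt_sum]
    by_cases hi : i = 0
    · subst hi
      rw [if_pos ⟨j, by simp⟩, if_pos rfl]
    · have hne : ¬ ∃ k, List.replicate i (1:Fin 2) ++ (0:Fin 2) :: List.replicate j 1
          = (0:Fin 2) :: List.replicate k 1 := by
        rintro ⟨k, hk⟩
        have e : (0:Fin 2) :: List.replicate k 1
            = List.replicate 0 (1:Fin 2) ++ (0:Fin 2) :: List.replicate k 1 := by simp
        rw [e] at hk
        exact hi (onezero_inj _ _ _ _ hk).1
      rw [if_neg hne, if_neg hi]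
  · have hne : ¬ ∃ k, w = (0:Fin 2) :: List.replicate k 1 := by
      rintro ⟨k, rfl⟩
      exact hw (by simp [List.count_cons, List.count_replicate,
        show (0:Fin 2) ≠ 1 by decide])
    rw [if_neg hne]
    symm
    refine Finset.sum_eq_zero fun p hp => ?_
    rw [count_shuffles_ne _ _ _ hw]
    simp
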